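/- In the exterior complex (E, d) as above, the elements l := h_{1,2}h_{2,1}h_{3,0} and l' := h_{1,0}h_{2,2}h_{3,1} are cocycles: d(l) = 0 and d(l') = 0. -/

import Mathlib

/-- The exterior algebra over `ZMod p` on nine degree-one generators `h i j`,
`i ∈ {1,2,3}`, `j ∈ ZMod 3`. -/
abbrev E (p : ℕ) : Type := ExteriorAlgebra (ZMod p) ((Fin 3 × ZMod 3) → ZMod p)

/-- The generator `h_{i,j}` (for `i ∈ {1,2,3}`). -/
noncomputable def h (p : ℕ) (i : ℕ) (j : ZMod 3) : E p :=
  ExteriorAlgebra.ι (ZMod p) (Pi.single (Fin.ofNat 3 (i - 1 : ℕ), j) 1)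

lemma hsq (p : ℕ) (i : ℕ) (j : ZMod 3) : h p i j * h p i j = 0 :=
  ExteriorAlgebra.ι_sq_zero _

lemma hswap (p : ℕ) (i k : ℕ) (j l : ZMod 3) :
    h p i j * h p k l = -(h p k l * h p i j) :=
  eq_neg_of_add_eq_zero_left (ExteriorAlgebra.ι_add_mul_swap _ _)

section
variable {R : Type*} [Ring R]

lemma tri (a b : R) (ha : a * a = 0) (hab : a * b = -(b * a)) :
    a * b * a = 0 := by
  rw [hab, neg_mul, mul_assoc, ha, mul_zero, neg_zero]

lemma quad (a b c : R) (ha : a * a = 0) (hab : a * b = -(b * a))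
    (hac : a * c = -(c * a)) : a * b * c * a = 0 := by
  have hca : c * a = -(a * c) := by rw [hac, neg_neg]
  calc a * b * c * a = a * b * (c * a) := by rw [mul_assoc]
    _ = -(a * b * a * c) := by rw [hca, mul_neg, ← mul_assoc]
    _ = 0 := by rw [tri a b ha hab, zero_mul, neg_zero]
end

theorem l_l1_cocycles (p : ℕ) (hp : p.Prime) (hodd : Odd p)
    (d : E p →ₗ[ZMod p] E p)
    (hd0 : d 1 = 0)
    (hd1 : ∀ j : ZMod 3, d (h p 1 j) = 0)
    (hd2 : ∀ j : ZMod 3, d (h p 2 j) = h p 1 j * h p 1 (j + 1))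
    (hd3 : ∀ j : ZMod 3, d (h p 3 j) = h p 1 j * h p 2 (j + 1) + h p 2 j * h p 1 (j + 2))
    (hleib : ∀ i ∈ ({1, 2, 3} : Set ℕ), ∀ (j : ZMod 3) (y : E p),
      d (h p i j * y) = d (h p i j) * y - h p i j * d y)
    :
    d (h p 1 2 * (h p 2 1 * h p 3 0)) = 0 ∧ d (h p 1 0 * (h p 2 2 * h p 3 1)) = 0 := by
  have h1 : ∀ j y, d (h p 1 j * y) = d (h p 1 j) * y - h p 1 j * d y :=
    hleib 1 (by simp)
  have h2 : ∀ j y, d (h p 2 j * y) = d (h p 2 j) * y - h p 2 j * d y :=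
    hleib 2 (by simp)
  have n1 : (1 + 1 : ZMod 3) = 2 := by decide
  have n2 : (2 + 1 : ZMod 3) = 0 := by decide
  have n3 : (2 + 2 : ZMod 3) = 1 := by decide
  have n4 : (1 + 2 : ZMod 3) = 0 := by decide
  constructor
  · rw [h1, h2, hd1, hd2, hd3]
    simp only [n1, zero_add, zero_mul, zero_sub, neg_eq_zero, mul_sub, mul_add,
      ← mul_assoc]
    have A : h p 1 2 * h p 1 1 * h p 1 2 = 0 := tri _ _ (hsq ..) (hswap ..)
    have B : h p 1 2 * h p 2 1 * h p 1 0 * h p 2 1 = 0 := by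
      rw [mul_assoc (h p 1 2), mul_assoc (h p 1 2),
        tri _ _ (hsq ..) (hswap ..), mul_zero]
    have C : h p 1 2 * h p 2 1 * h p 2 0 * h p 1 2 = 0 :=
      quad _ _ _ (hsq ..) (hswap ..) (hswap ..)
    rw [A, B, C, zero_mul, zero_sub, add_zero, neg_zero]
  · rw [h1, h2, hd1, hd2, hd3]
    simp only [n1, n2, n3, n4, zero_add, zero_mul, zero_sub, neg_eq_zero, mul_sub,
      mul_add, ← mul_assoc]
    have A : h p 1 0 * h p 1 2 * h p 1 0 = 0 := tri _ _ (hsq ..) (hswap ..)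
    have B : h p 1 0 * h p 2 2 * h p 1 1 * h p 2 2 = 0 := by
      rw [mul_assoc (h p 1 0), mul_assoc (h p 1 0),
        tri _ _ (hsq ..) (hswap ..), mul_zero]
    have C : h p 1 0 * h p 2 2 * h p 2 1 * h p 1 0 = 0 :=
      quad _ _ _ (hsq ..) (hswap ..) (hswap ..)
    rw [A, B, C, zero_mul, zero_sub, add_zero, neg_zero]
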